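/- Let H be a 1-intersecting k-uniform hypergraph. Then the set of vertices of degree at least 2 is a kernel of H, and moreover it is the minimum kernel: every kernel of H contains all vertices of degree at least 2. -/
import Mathlib


/-- In a 1-intersecting k-uniform hypergraph (with at least two edges), the set of
vertices of degree at least 2 is a kernel, and every kernel contains it. -/
theorem min_kernel_one_intersecting {V : Type*} [Fintype V] [DecidableEq V]
    (k : ℕ) (H : Finset (Finset V)) (hH : 2 ≤ H.card)
    (hunif : ∀ e ∈ H, e.card = k)
    (hint : ∀ e ∈ H, ∀ f ∈ H, e ≠ f → (e ∩ f).card = 1) :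
    (let IsKernel : Finset V → Prop := fun A =>
      (∀ e ∈ H, (e ∩ A).Nonempty) ∧
        ∀ e ∈ H, ∀ f ∈ H, e ≠ f → ((e ∩ A) ∩ (f ∩ A)).Nonempty
    let D2 : Finset V := Finset.univ.filter (fun v => 2 ≤ (H.filter (fun e => v ∈ e)).card)
    IsKernel D2 ∧ ∀ A : Finset V, IsKernel A → D2 ⊆ A) := by
  intro IsKernel D2
  have hmem : ∀ v : V, v ∈ D2 ↔ 2 ≤ (H.filter (fun e => v ∈ e)).card := by
    intro v; simp [D2]
  have key : ∀ e ∈ H, ∀ f ∈ H, e ≠ f → ∀ v ∈ e ∩ f, v ∈ D2 := by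
    intro e he f hf hef v hv
    rw [hmem]
    have hsub : ({e, f} : Finset (Finset V)) ⊆ H.filter (fun g => v ∈ g) := by
      intro g hg
      simp only [Finset.mem_insert, Finset.mem_singleton] at hg
      simp only [Finset.mem_inter] at hv
      rcases hg with rfl | rfl
      · exact Finset.mem_filter.mpr ⟨he, hv.1⟩
      · exact Finset.mem_filter.mpr ⟨hf, hv.2⟩
    calc 2 = ({e, f} : Finset (Finset V)).card := (Finset.card_pair hef).symm
      _ ≤ _ := Finset.card_le_card hsub
  constructor
  · constructor
    · intro e he
      obtain ⟨f, hf, hfe⟩ := Finset.exists_mem_ne (show 1 < H.card by omega) e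
      have h1 := hint e he f hf (Ne.symm hfe)
      obtain ⟨v, hv⟩ := Finset.card_pos.mp (by omega : 0 < (e ∩ f).card)
      exact ⟨v, Finset.mem_inter.mpr ⟨(Finset.mem_inter.mp hv).1,
        key e he f hf (Ne.symm hfe) v hv⟩⟩
    · intro e he f hf hef
      have h1 := hint e he f hf hef
      obtain ⟨v, hv⟩ := Finset.card_pos.mp (by omega : 0 < (e ∩ f).card)
      have hvD := key e he f hf hef v hv
      simp only [Finset.mem_inter] at hv
      exact ⟨v, by simp [Finset.mem_inter, hv.1, hv.2, hvD]⟩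
  · intro A hA v hv
    rw [hmem] at hv
    obtain ⟨e, he, f, hf, hef⟩ := Finset.one_lt_card.mp (by omega : 1 < (H.filter (fun e => v ∈ e)).card)
    obtain ⟨heH, hve⟩ := Finset.mem_filter.mp he
    obtain ⟨hfH, hvf⟩ := Finset.mem_filter.mp hf
    have h1 := hint e heH f hfH hef
    have hsingle : e ∩ f = {v} := by
      obtain ⟨w, hw⟩ := Finset.card_eq_one.mp h1
      have : v ∈ e ∩ f := Finset.mem_inter.mpr ⟨hve, hvf⟩
      rw [hw] at this
      rw [hw, Finset.mem_singleton.mp this]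
    obtain ⟨w, hw⟩ := hA.2 e heH f hfH hef
    simp only [Finset.mem_inter] at hw
    have : w ∈ e ∩ f := Finset.mem_inter.mpr ⟨hw.1.1, hw.2.1⟩
    rw [hsingle, Finset.mem_singleton] at this
    subst this
    exact hw.1.2
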